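/- Let A, B ∈ ℤ with 0 < A ≤ B and B ≥ 2, let M = [[0, −B], [1, −A]] acting on ℝ², and let T be the tile for M and digits {0, …, B−1}·e₁. Then T is centrally symmetric with respect to the digit-flip a ↦ B−1−a: T = t − T, where t = Σ_{n≥1} M^{−n}·((B−1)·e₁); that is, x ∈ T if and only if t − x ∈ T. Consequently the boundary satisfies ∂T = t − ∂T. -/

import Mathlib

noncomputable section

/-- The matrix `[[0, -B], [1, -A]]` as a real matrix. -/
def M' (A B : ℤ) : Matrix (Fin 2) (Fin 2) ℝ := !![0, -(B : ℝ); 1, -(A : ℝ)]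

/-- `e₁ = (1, 0) ∈ ℝ²`. -/
def e1 : Fin 2 → ℝ := ![1, 0]

/-- The symmetry point `t = Σ_{n≥1} M^{-n}·((B-1)e₁)` of the tile. -/
def symPt (A B : ℤ) : Fin 2 → ℝ :=
  ∑' n : ℕ, ((M' A B)⁻¹ ^ (n + 1)).mulVec (((B : ℝ) - 1) • e1)

namespace TileAux

attribute [local instance] Matrix.linftyOpNormedRing Matrix.linftyOpNormedAlgebra

open Filter Topology Matrix
open scoped ENNReal NNReal

variable {A B : ℤ}

def Nc (A B : ℤ) : Matrix (Fin 2) (Fin 2) ℂ :=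
  Complex.ofRealHom.mapMatrix ((M' A B)⁻¹)

def Mc (A B : ℤ) : Matrix (Fin 2) (Fin 2) ℂ :=
  Complex.ofRealHom.mapMatrix (M' A B)

lemma detM (A B : ℤ) : (M' A B).det = (B : ℝ) := by
  simp [M', Matrix.det_fin_two_of]

lemma hdet (hB : B ≠ 0) : IsUnit (M' A B).det := by
  rw [detM]; exact isUnit_iff_ne_zero.2 (by exact_mod_cast hB)

lemma hMN (hB : B ≠ 0) : M' A B * (M' A B)⁻¹ = 1 := Matrix.mul_nonsing_inv _ (hdet hB)
lemma hNM (hB : B ≠ 0) : (M' A B)⁻¹ * M' A B = 1 := Matrix.nonsing_inv_mul _ (hdet hB)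

lemma hNcMc (hB : B ≠ 0) : Nc A B * Mc A B = 1 := by
  rw [Mc, Nc, ← _root_.map_mul, hNM hB, _root_.map_one]

lemma spec_subset (hB2 : 2 ≤ B) {μ : ℂ} (hμ : μ ∈ spectrum ℂ (Nc A B)) :
    (B:ℂ) * μ^2 + (A:ℂ)*μ + 1 = 0 := by
  have hB : B ≠ 0 := by omega
  by_contra hne
  apply spectrum.mem_iff.1 hμ
  have hdet2 : (μ • Mc A B - 1).det = (B:ℂ)*μ^2 + (A:ℂ)*μ + 1 := by
    simp [Mc, M', Matrix.det_fin_two, RingHom.mapMatrix_apply, Matrix.map_apply,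
      Matrix.smul_apply, Matrix.one_apply, Matrix.sub_apply]
    ring
  have key : algebraMap ℂ (Matrix (Fin 2) (Fin 2) ℂ) μ - Nc A B
      = Nc A B * (μ • Mc A B - 1) := by
    rw [Matrix.mul_sub, mul_smul_comm, hNcMc hB, mul_one, Algebra.algebraMap_eq_smul_one]
  rw [key]
  have h1 : IsUnit (Nc A B) := (Matrix.isUnit_iff_isUnit_det _).2 (Matrix.isUnit_det_of_right_inverse (hNcMc hB))
  have h2 : IsUnit (μ • Mc A B - 1) := by
    rw [Matrix.isUnit_iff_isUnit_det, isUnit_iff_ne_zero, hdet2]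
    exact hne
  exact h1.mul h2

set_option maxHeartbeats 2000000 in
lemma root_bound (hA : 0 < A) (hAB : A ≤ B) (hB : 2 ≤ B) (μ : ℂ)
    (h : (B : ℂ) * μ ^ 2 + (A : ℂ) * μ + 1 = 0) :
    ‖μ‖ ≤ 1 - 1 / (2 * (B : ℝ)) := by
  have hA1 : (1 : ℝ) ≤ (A : ℝ) := by exact_mod_cast hA
  have hAB' : (A : ℝ) ≤ (B : ℝ) := by exact_mod_cast hAB
  have hB2 : (2 : ℝ) ≤ (B : ℝ) := by exact_mod_cast hB
  have hBpos : (0:ℝ) < B := by linarith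
  have h2B : (0:ℝ) < 2 * B := by linarith
  set w : ℂ := 2 * (B:ℂ) * μ + (A:ℂ) with hw_def
  have hw2 : w ^ 2 = (((A:ℝ)^2 - 4*(B:ℝ) : ℝ) : ℂ) := by
    rw [hw_def]; push_cast; linear_combination (4*(B:ℂ)) * h
  have h1 : w.re * w.re - w.im * w.im = (A:ℝ)^2 - 4*B := by
    have := congrArg Complex.re hw2
    simpa [sq, Complex.mul_re] using this
  have h2 : w.re * w.im = 0 := by
    have := congrArg Complex.im hw2
    simp [sq, Complex.mul_im] at this
    nlinarith [this]
  have hwA : ‖w - (A:ℂ)‖ = 2 * (B:ℝ) * ‖μ‖ := by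
    have hsplit : w - (A:ℂ) = (((2*(B:ℝ)):ℝ):ℂ) * μ := by rw [hw_def]; push_cast; ring
    rw [hsplit, norm_mul, Complex.norm_real, Real.norm_eq_abs, abs_of_pos h2B]
  rcases le_or_gt 0 ((A:ℝ)^2 - 4*(B:ℝ)) with hs | hs
  · -- real eigenvalues
    have him : w.im = 0 := by
      rcases mul_eq_zero.1 h2 with hre | him
      · have : w.im^2 = 0 := by nlinarith [sq_nonneg w.im]
        exact pow_eq_zero_iff (n := 2) (by norm_num) |>.1 this
      · exact him
    have hx2 : w.re^2 = (A:ℝ)^2 - 4*B := by rw [him] at h1; nlinarith [h1]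
    have hc : (0:ℝ) ≤ 2*(B:ℝ) - 2 - A := by linarith
    have key : w.re^2 ≤ (2*(B:ℝ)-2-A)^2 := by
      nlinarith [mul_nonneg (sub_nonneg.2 hAB') (by linarith : (0:ℝ) ≤ (B:ℝ) - 1)]
    have habs : |w.re| ≤ 2*(B:ℝ)-2-A := by
      rw [abs_le]; constructor <;>
        nlinarith [sq_nonneg (w.re - (2*(B:ℝ)-2-A)), sq_nonneg (w.re + (2*(B:ℝ)-2-A))]
    have hre_bounds := abs_le.1 habs
    have hwr : w - (A:ℂ) = ((w.re - (A:ℝ) : ℝ) : ℂ) := by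
      apply Complex.ext <;> simp [him]
    have hnormbound : ‖w - (A:ℂ)‖ ≤ 2*(B:ℝ) - 1 := by
      rw [hwr, Complex.norm_real, Real.norm_eq_abs, abs_le]
      constructor <;> [linarith [hre_bounds.1]; linarith [hre_bounds.2]]
    have hfin : ‖μ‖ ≤ (2*(B:ℝ)-1)/(2*(B:ℝ)) := by
      rw [le_div_iff₀ h2B]; rw [hwA] at hnormbound; linarith
    calc ‖μ‖ ≤ (2*(B:ℝ)-1)/(2*(B:ℝ)) := hfin
      _ = 1 - 1/(2*(B:ℝ)) := by field_simp
  · -- complex eigenvalues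
    have hre : w.re = 0 := by
      rcases mul_eq_zero.1 h2 with hre | him
      · exact hre
      · exfalso; rw [him] at h1; nlinarith [sq_nonneg w.re]
    have him2 : w.im * w.im = 4*(B:ℝ) - (A:ℝ)^2 := by rw [hre] at h1; linarith
    have hn : ‖w - (A:ℂ)‖^2 = 4*(B:ℝ) := by
      rw [show ‖w - (A:ℂ)‖^2 = Complex.normSq (w - (A:ℂ)) by
            rw [Complex.sq_norm], Complex.normSq_apply]
      simp [Complex.sub_re, Complex.sub_im, hre]
      nlinarith [him2]
    have hsq : (2*(B:ℝ)*‖μ‖)^2 = 4*(B:ℝ) := by rw [← hwA]; exact hn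
    have hm2 : ‖μ‖^2 * (B:ℝ) = 1 := by
      have hz : 4*(B:ℝ)*(‖μ‖^2 * (B:ℝ) - 1) = 0 := by linear_combination hsq
      rcases mul_eq_zero.1 hz with h' | h'
      · exact absurd h' (by positivity)
      · linarith
    have hm22 : 2*‖μ‖^2 ≤ 1 := by
      have hmono : 0 ≤ ‖μ‖^2*((B:ℝ)-2) := mul_nonneg (sq_nonneg _) (by linarith)
      nlinarith [hmono, hm2]
    have gen : ∀ m : ℝ, 2*m^2 ≤ 1 → m ≤ 3/4 := by
      intro m hm'
      nlinarith [sq_nonneg (m - 3/4)]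
    have h34 : ‖μ‖ ≤ 3/4 := gen _ hm22
    have hq : 1/(2*(B:ℝ)) ≤ 1/4 :=
      one_div_le_one_div_of_le (by norm_num) (by linarith)
    linarith


lemma exists_geo (hA : 0 < A) (hAB : A ≤ B) (hB : 2 ≤ B) :
    ∃ r : ℝ, 0 < r ∧ r < 1 ∧ ∀ᶠ n : ℕ in atTop, ‖(Nc A B)^n‖ ≤ r^n := by
  have hB2 : (2:ℝ) ≤ (B:ℝ) := by exact_mod_cast hB
  have hBpos : (0:ℝ) < B := by linarith
  have h4B : (0:ℝ) < 4*B := by linarith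
  have hquarter : 1/(4*(B:ℝ)) ≤ 1/8 := one_div_le_one_div_of_le (by norm_num) (by linarith)
  have hquarterpos : 0 < 1/(4*(B:ℝ)) := by positivity
  set r : ℝ := 1 - 1/(4*(B:ℝ)) with hr_def
  have hr0 : 0 < r := by rw [hr_def]; linarith
  have hr1 : r < 1 := by rw [hr_def]; linarith
  refine ⟨r, hr0, hr1, ?_⟩
  haveI : CompleteSpace (Matrix (Fin 2) (Fin 2) ℂ) := FiniteDimensional.complete ℂ _
  have hsr : spectralRadius ℂ (Nc A B) < ENNReal.ofReal r := by
    have hle : spectralRadius ℂ (Nc A B) ≤ ENNReal.ofReal (1 - 1/(2*(B:ℝ))) := by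
      rw [spectralRadius]
      refine iSup₂_le fun μ hμ => ?_
      have hbd := root_bound hA hAB hB μ (spec_subset hB hμ)
      rw [← enorm_eq_nnnorm, ← ofReal_norm]
      exact ENNReal.ofReal_le_ofReal hbd
    refine hle.trans_lt ?_
    rw [ENNReal.ofReal_lt_ofReal_iff hr0]
    have : 1/(4*(B:ℝ)) < 1/(2*(B:ℝ)) := by
      apply one_div_lt_one_div_of_lt (by linarith) (by linarith)
    rw [hr_def]; linarith
  have htend := spectrum.pow_nnnorm_pow_one_div_tendsto_nhds_spectralRadius (Nc A B)
  have hev := htend.eventually_lt_const hsr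
  filter_upwards [hev, eventually_ge_atTop 1] with n hn hn1
  have hnne : (n:ℝ) ≠ 0 := by positivity
  have h1 := ENNReal.rpow_le_rpow hn.le (le_of_lt (by positivity : (0:ℝ) < (n:ℝ)))
  rw [← ENNReal.rpow_mul, one_div, inv_mul_cancel₀ hnne, ENNReal.rpow_one] at h1
  rw [ENNReal.ofReal_rpow_of_pos hr0, Real.rpow_natCast,
    ← enorm_eq_nnnorm, ← ofReal_norm] at h1
  exact (ENNReal.ofReal_le_ofReal_iff (by positivity)).1 h1

lemma summable_norm (hA : 0 < A) (hAB : A ≤ B) (hB : 2 ≤ B) :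
    Summable (fun n : ℕ => ‖(Nc A B)^n‖) := by
  obtain ⟨r, hr0, hr1, hev⟩ := exists_geo hA hAB hB
  refine Summable.of_norm_bounded_eventually_nat (summable_geometric_of_lt_one hr0.le hr1) ?_
  filter_upwards [hev] with n hn
  rwa [Real.norm_eq_abs, abs_of_nonneg (norm_nonneg _)]

lemma tend0 (hA : 0 < A) (hAB : A ≤ B) (hB : 2 ≤ B) :
    Filter.Tendsto (fun n : ℕ => ‖(Nc A B)^n‖) atTop (𝓝 0) :=
  (summable_norm hA hAB hB).tendsto_atTop_zero

lemma mulVec_ofReal (P : Matrix (Fin 2) (Fin 2) ℝ) (v : Fin 2 → ℝ) :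
    (Complex.ofRealHom.mapMatrix P).mulVec (fun i => ((v i : ℝ) : ℂ))
      = fun i => ((P.mulVec v i : ℝ) : ℂ) := by
  funext i
  simp only [RingHom.mapMatrix_apply, Matrix.mulVec, dotProduct, Matrix.map_apply,
    Complex.ofRealHom_eq_coe]
  push_cast
  rfl

lemma norm_ofReal_vec (v : Fin 2 → ℝ) : ‖(fun i => ((v i : ℝ) : ℂ))‖ = ‖v‖ := by
  simp [Pi.norm_def, Complex.nnnorm_real]

lemma norm_mulVec_le (A B : ℤ) (n : ℕ) (v : Fin 2 → ℝ) :
    ‖(((M' A B)⁻¹)^n).mulVec v‖ ≤ ‖(Nc A B)^n‖ * ‖v‖ := by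
  have h1 : (Nc A B)^n = Complex.ofRealHom.mapMatrix (((M' A B)⁻¹)^n) := by
    rw [Nc, ← _root_.map_pow]
  calc ‖(((M' A B)⁻¹)^n).mulVec v‖
      = ‖((Nc A B)^n).mulVec (fun i => ((v i : ℝ) : ℂ))‖ := by
        rw [h1, mulVec_ofReal, norm_ofReal_vec]
    _ ≤ ‖(Nc A B)^n‖ * ‖(fun i => ((v i : ℝ) : ℂ))‖ := Matrix.linfty_opNorm_mulVec _ _
    _ = ‖(Nc A B)^n‖ * ‖v‖ := by rw [norm_ofReal_vec]

lemma summable_pow_mulVec (hA : 0 < A) (hAB : A ≤ B) (hB : 2 ≤ B) (v : Fin 2 → ℝ) :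
    Summable (fun n : ℕ => (((M' A B)⁻¹)^n).mulVec v) :=
  Summable.of_norm_bounded ((summable_norm hA hAB hB).mul_right ‖v‖)
    (fun n => norm_mulVec_le A B n v)

lemma mulVec_symPt (hA : 0 < A) (hAB : A ≤ B) (hB : 2 ≤ B) :
    (M' A B).mulVec (symPt A B) = symPt A B + ((B:ℝ) - 1) • e1 := by
  have hBne : B ≠ 0 := by omega
  have hsum : Summable (fun n : ℕ => (((M' A B)⁻¹)^n).mulVec (((B:ℝ) - 1) • e1)) :=
    summable_pow_mulVec hA hAB hB _
  have hsum1 : Summable (fun n : ℕ => (((M' A B)⁻¹)^(n+1)).mulVec (((B:ℝ) - 1) • e1)) :=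
    (summable_nat_add_iff 1).2 hsum
  have hL : (M' A B).mulVec (∑' n : ℕ, (((M' A B)⁻¹)^(n+1)).mulVec (((B:ℝ) - 1) • e1))
      = ∑' n : ℕ, (M' A B).mulVec ((((M' A B)⁻¹)^(n+1)).mulVec (((B:ℝ) - 1) • e1)) := by
    have := ((M' A B).mulVecLin.toContinuousLinearMap).map_tsum hsum1
    simpa using this
  have hstep : ∀ n : ℕ, (M' A B).mulVec ((((M' A B)⁻¹)^(n+1)).mulVec (((B:ℝ) - 1) • e1))
      = (((M' A B)⁻¹)^n).mulVec (((B:ℝ) - 1) • e1) := by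
    intro n
    rw [Matrix.mulVec_mulVec]
    rw [pow_succ', ← mul_assoc, hMN hBne, one_mul]
  rw [symPt, hL]
  simp_rw [hstep]
  rw [hsum.tsum_eq_zero_add, pow_zero, Matrix.one_mulVec]
  abel

lemma subset_of_eqs (hA : 0 < A) (hAB : A ≤ B) (hB : 2 ≤ B)
    {T S : Set (Fin 2 → ℝ)}
    (hTcp : IsCompact T) (hScp : IsCompact S) (hSne : S.Nonempty)
    (hT : (M' A B).mulVec '' T = ⋃ j ∈ Set.Icc (0:ℤ) (B-1), (fun x => x + (j:ℝ) • e1) '' T)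
    (hS : (M' A B).mulVec '' S = ⋃ j ∈ Set.Icc (0:ℤ) (B-1), (fun x => x + (j:ℝ) • e1) '' S) :
    T ⊆ S := by
  have hBne : B ≠ 0 := by omega
  have hNMvec : ∀ x, ((M' A B)⁻¹).mulVec ((M' A B).mulVec x) = x := by
    intro x; rw [Matrix.mulVec_mulVec, hNM hBne, Matrix.one_mulVec]
  have stepT : ∀ x ∈ T, ∃ j ∈ Set.Icc (0:ℤ) (B-1), ∃ y ∈ T,
      x = ((M' A B)⁻¹).mulVec (y + (j:ℝ) • e1) := by
    intro x hx
    have hmem : (M' A B).mulVec x ∈ (M' A B).mulVec '' T := Set.mem_image_of_mem _ hx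
    rw [hT] at hmem
    simp only [Set.mem_iUnion, Set.mem_image] at hmem
    obtain ⟨j, hj, y, hy, hxy⟩ := hmem
    exact ⟨j, hj, y, hy, by rw [hxy, hNMvec]⟩
  have stepS : ∀ j ∈ Set.Icc (0:ℤ) (B-1), ∀ z ∈ S,
      ((M' A B)⁻¹).mulVec (z + (j:ℝ) • e1) ∈ S := by
    intro j hj z hz
    have hmem : z + (j:ℝ) • e1 ∈ ⋃ j ∈ Set.Icc (0:ℤ) (B-1), (fun x => x + (j:ℝ) • e1) '' S := by
      simp only [Set.mem_iUnion, Set.mem_image]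
      exact ⟨j, hj, z, hz, rfl⟩
    rw [← hS] at hmem
    obtain ⟨w, hw, hwz⟩ := hmem
    rw [← hwz, hNMvec]; exact hw
  obtain ⟨C, hC⟩ := Metric.isBounded_iff.1 (hTcp.union hScp).isBounded
  obtain ⟨z₀, hz₀⟩ := hSne
  have hC0 : 0 ≤ C := le_trans dist_nonneg
    (hC (Set.mem_union_right _ hz₀) (Set.mem_union_right _ hz₀))
  have main : ∀ n : ℕ, ∀ x ∈ T, ∃ p ∈ S, ∃ u : Fin 2 → ℝ,
      ‖u‖ ≤ C ∧ x - p = (((M' A B)⁻¹)^n).mulVec u := by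
    intro n
    induction n with
    | zero =>
      intro x hx
      refine ⟨z₀, hz₀, x - z₀, ?_, by rw [pow_zero, Matrix.one_mulVec]⟩
      rw [← dist_eq_norm]
      exact hC (Set.mem_union_left _ hx) (Set.mem_union_right _ hz₀)
    | succ n ih =>
      intro x hx
      obtain ⟨j, hj, y, hy, hxy⟩ := stepT x hx
      obtain ⟨p, hp, u, hu, hyp⟩ := ih y hy
      refine ⟨((M' A B)⁻¹).mulVec (p + (j:ℝ) • e1), stepS j hj p hp, u, hu, ?_⟩
      rw [hxy, ← Matrix.mulVec_sub]
      have harith : y + (j:ℝ) • e1 - (p + (j:ℝ) • e1) = y - p := by abel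
      rw [harith, hyp, Matrix.mulVec_mulVec, ← pow_succ']
  intro x hx
  have hclosed : IsClosed S := hScp.isClosed
  rw [← hclosed.closure_eq]
  rw [Metric.mem_closure_iff]
  intro ε hε
  have htendC : Filter.Tendsto (fun n : ℕ => ‖(Nc A B)^n‖ * C) atTop (𝓝 0) := by
    simpa using (tend0 hA hAB hB).mul_const C
  obtain ⟨n, hn⟩ := (htendC.eventually_lt_const hε).exists
  obtain ⟨p, hp, u, hu, hxp⟩ := main n x hx
  refine ⟨p, hp, ?_⟩
  rw [dist_eq_norm, hxp]
  calc ‖(((M' A B)⁻¹)^n).mulVec u‖ ≤ ‖(Nc A B)^n‖ * ‖u‖ := norm_mulVec_le A B n u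
    _ ≤ ‖(Nc A B)^n‖ * C := mul_le_mul_of_nonneg_left hu (norm_nonneg _)
    _ < ε := hn

lemma image_eq (hA : 0 < A) (hAB : A ≤ B) (hB : 2 ≤ B)
    {T : Set (Fin 2 → ℝ)}
    (hT : (M' A B).mulVec '' T = ⋃ j ∈ Set.Icc (0:ℤ) (B-1), (fun x => x + (j:ℝ) • e1) '' T) :
    (M' A B).mulVec '' ((fun x => symPt A B - x) '' T)
      = ⋃ j ∈ Set.Icc (0:ℤ) (B-1),
          (fun x => x + (j:ℝ) • e1) '' ((fun x => symPt A B - x) '' T) := by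
  have hMt := mulVec_symPt hA hAB hB
  ext z
  simp only [Set.mem_image, Set.mem_iUnion, exists_prop]
  constructor
  · rintro ⟨w, ⟨x, hx, rfl⟩, rfl⟩
    have hmem : (M' A B).mulVec x ∈ (M' A B).mulVec '' T := Set.mem_image_of_mem _ hx
    rw [hT] at hmem
    simp only [Set.mem_iUnion, Set.mem_image, exists_prop] at hmem
    obtain ⟨j, hj, y, hy, hxy⟩ := hmem
    rw [Set.mem_Icc] at hj
    refine ⟨B - 1 - j, Set.mem_Icc.2 (by omega), ⟨symPt A B - y, ⟨y, hy, rfl⟩, ?_⟩⟩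
    rw [Matrix.mulVec_sub, hMt, ← hxy]
    push_cast
    module
  · rintro ⟨j, hj, ⟨w, ⟨x, hx, rfl⟩, rfl⟩⟩
    rw [Set.mem_Icc] at hj
    have hk : (B - 1 - j : ℤ) ∈ Set.Icc (0:ℤ) (B-1) := Set.mem_Icc.2 (by omega)
    have hmem : x + ((B - 1 - j : ℤ) : ℝ) • e1
        ∈ ⋃ i ∈ Set.Icc (0:ℤ) (B-1), (fun x => x + (i:ℝ) • e1) '' T := by
      simp only [Set.mem_iUnion, Set.mem_image, exists_prop]
      exact ⟨B - 1 - j, hk, x, hx, rfl⟩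
    rw [← hT] at hmem
    obtain ⟨y, hy, hMy⟩ := hmem
    refine ⟨symPt A B - y, ⟨y, hy, rfl⟩, ?_⟩
    rw [Matrix.mulVec_sub, hMt, hMy]
    push_cast
    module

end TileAux

/-- The tile `T` is centrally symmetric: `T = t - T`, i.e.
`x ∈ T ↔ t - x ∈ T`; consequently `∂T = t - ∂T`. -/
theorem tile_central_symmetry
    (A B : ℤ) (hA : 0 < A) (hAB : A ≤ B) (hB : 2 ≤ B)
    (T : Set (Fin 2 → ℝ)) (hTne : T.Nonempty) (hTcp : IsCompact T)
    (hT : (M' A B).mulVec '' T =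
      ⋃ j ∈ Set.Icc (0 : ℤ) (B - 1), (fun x => x + (j : ℝ) • e1) '' T) :
    T = (fun x => symPt A B - x) '' T ∧
    (∀ x, x ∈ T ↔ symPt A B - x ∈ T) ∧
    frontier T = (fun x => symPt A B - x) '' frontier T := by
  set φ : (Fin 2 → ℝ) → (Fin 2 → ℝ) := fun x => symPt A B - x with hφ
  have hφcont : Continuous φ := continuous_const.sub continuous_id
  have hScp : IsCompact (φ '' T) := hTcp.image hφcont
  have hSne : (φ '' T).Nonempty := hTne.image φ
  have hS := TileAux.image_eq hA hAB hB hT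
  have h1 : T = φ '' T :=
    Set.Subset.antisymm (TileAux.subset_of_eqs hA hAB hB hTcp hScp hSne hT hS)
      (TileAux.subset_of_eqs hA hAB hB hScp hTcp hTne hS hT)
  refine ⟨h1, ?_, ?_⟩
  · intro x
    constructor
    · intro hx
      have : φ x ∈ φ '' T := Set.mem_image_of_mem φ hx
      rwa [← h1] at this
    · intro hx
      have : φ (symPt A B - x) ∈ φ '' T := Set.mem_image_of_mem φ hx
      rw [← h1] at this
      simpa [hφ, sub_sub_cancel] using this
  · set e : (Fin 2 → ℝ) ≃ₜ (Fin 2 → ℝ) :=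
      (Homeomorph.neg (Fin 2 → ℝ)).trans (Homeomorph.addLeft (symPt A B)) with he_def
    have hecoe : ⇑e = φ := by
      funext x
      simp [he_def, hφ, sub_eq_add_neg]
    have himg : φ '' frontier T = frontier (φ '' T) := by
      rw [← hecoe]
      exact e.image_frontier T
    conv_lhs => rw [h1]
    rw [← himg]
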